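/- Let d ≥ 2 and let Z : ℝ^d → ℝ^d be twice continuously differentiable such that there is a function φ : ℝ^d → ℝ with fderiv ℝ Z x = φ(x) • id for every x ∈ ℝ^d. Then φ is constant, and there exist c ∈ ℝ and Z₀ ∈ ℝ^d such that Z x = c • x + Z₀ for all x; that is, every closed conformal vector field on a semi-Euclidean space of dimension at least 2 is either parallel (c = 0) or radial. -/

import Mathlib

noncomputable section

/-- Every closed conformal vector field on a (semi-)Euclidean space of
dimension at least 2 has constant conformal factor and is affine: either parallel or radial. -/
theorem cc_field_euclidean_parallel_or_radial {d : ℕ} (hd : 2 ≤ d)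
    (Z : EuclideanSpace ℝ (Fin d) → EuclideanSpace ℝ (Fin d))
    (φ : EuclideanSpace ℝ (Fin d) → ℝ)
    (hZ : ContDiff ℝ 2 Z)
    (hCC : ∀ x, fderiv ℝ Z x = φ x • ContinuousLinearMap.id ℝ (EuclideanSpace ℝ (Fin d))) :
    ∃ (c : ℝ) (Z₀ : EuclideanSpace ℝ (Fin d)),
      (∀ x, φ x = c) ∧ (∀ x, Z x = c • x + Z₀) := by
  let i0 : Fin d := ⟨0, by omega⟩
  let i1 : Fin d := ⟨1, by omega⟩
  let e0 : EuclideanSpace ℝ (Fin d) := EuclideanSpace.single i0 (1:ℝ)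
  let e1 : EuclideanSpace ℝ (Fin d) := EuclideanSpace.single i1 (1:ℝ)
  have hZdiff : Differentiable ℝ Z := hZ.differentiable (by norm_num)
  have h1 : ContDiff ℝ 1 (fderiv ℝ Z) := hZ.fderiv_right (by norm_num)
  let F : (EuclideanSpace ℝ (Fin d) →L[ℝ] EuclideanSpace ℝ (Fin d)) →L[ℝ] ℝ :=
    (EuclideanSpace.proj i0).comp (ContinuousLinearMap.apply ℝ (EuclideanSpace ℝ (Fin d)) e0)
  have hφeq : φ = fun x => F (fderiv ℝ Z x) := by
    funext x
    simp only [F, ContinuousLinearMap.comp_apply, ContinuousLinearMap.apply_apply, hCC x]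
    simp [e0, PiLp.proj_apply, EuclideanSpace.single_apply]
  have hφdiff : Differentiable ℝ φ := by
    rw [hφeq]
    exact F.differentiable.comp (h1.differentiable (by norm_num))
  -- second derivative symmetry
  have hsymm : ∀ x v w, (fderiv ℝ φ x v) • w = (fderiv ℝ φ x w) • v := by
    intro x v w
    have hZ' : ∀ y, HasFDerivAt Z
        (φ y • ContinuousLinearMap.id ℝ (EuclideanSpace ℝ (Fin d))) y := by
      intro y
      have := (hZdiff y).hasFDerivAt
      rwa [hCC y] at this
    have hf'' : HasFDerivAt (fun y => φ y • ContinuousLinearMap.id ℝ (EuclideanSpace ℝ (Fin d)))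
        ((fderiv ℝ φ x).smulRight (ContinuousLinearMap.id ℝ (EuclideanSpace ℝ (Fin d)))) x :=
      (hφdiff x).hasFDerivAt.smul_const (ContinuousLinearMap.id ℝ (EuclideanSpace ℝ (Fin d)))
    have := second_derivative_symmetric hZ' hf'' v w
    simpa using this
  -- the derivative of φ vanishes
  have hdφ : ∀ x, fderiv ℝ φ x = 0 := by
    intro x
    have he1 : fderiv ℝ φ x e1 = 0 := by
      have h := hsymm x e1 e0
      have h2 := congrArg (fun (u : EuclideanSpace ℝ (Fin d)) => u i0) h
      simp only [PiLp.smul_apply, smul_eq_mul] at h2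
      simp only [e0, e1, EuclideanSpace.single_apply] at h2
      simpa [i0, i1] using h2
    ext v
    have h := hsymm x v e1
    have h2 := congrArg (fun (u : EuclideanSpace ℝ (Fin d)) => u i1) h
    simp only [PiLp.smul_apply, smul_eq_mul, he1, zero_mul] at h2
    simp only [e1, EuclideanSpace.single_apply] at h2
    simpa using h2
  have hφconst : ∀ x, φ x = φ 0 := fun x =>
    is_const_of_fderiv_eq_zero hφdiff hdφ x 0
  refine ⟨φ 0, Z 0, hφconst, ?_⟩
  intro x
  have hg : ∀ y, HasFDerivAt (fun x => Z x - (φ 0) • x)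
      (0 : EuclideanSpace ℝ (Fin d) →L[ℝ] EuclideanSpace ℝ (Fin d)) y := by
    intro y
    have h1 : HasFDerivAt Z (φ 0 • ContinuousLinearMap.id ℝ (EuclideanSpace ℝ (Fin d))) y := by
      have := (hZdiff y).hasFDerivAt
      rwa [hCC y, hφconst y] at this
    have h2 : HasFDerivAt (fun x : EuclideanSpace ℝ (Fin d) => (φ 0) • x)
        (φ 0 • ContinuousLinearMap.id ℝ (EuclideanSpace ℝ (Fin d))) y :=
      (hasFDerivAt_id y).const_smul (φ 0)
    have h3 := h1.sub h2
    rw [sub_self] at h3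
    exact h3
  have hconst : Z x - (φ 0) • x = Z 0 - (φ 0) • (0:EuclideanSpace ℝ (Fin d)) :=
    is_const_of_fderiv_eq_zero (fun y => (hg y).differentiableAt)
      (fun y => (hg y).fderiv) x 0
  rw [smul_zero, sub_zero] at hconst
  rw [← hconst]; abel

end
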